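/- The following identity of homogeneous polynomials holds: ∏_{1≤i<j≤k}(x_j - x_i) · (x_1+...+x_k)^n = ∑_{n_1+...+n_k = n + k(k-1)/2} (n!/∏ n_i!) · ∏_{i<j}(n_j - n_i) · ∏_{i=1}^k x_i^{n_i}, where the sum is over k-tuples of nonnegative integers. -/

import Mathlib

open MvPolynomial Finset

private lemma prod_pairs' {M : Type*} [CommMonoid M] (k : ℕ) (f : Fin k → Fin k → M) :
    ∏ p ∈ Finset.univ.filter (fun p : Fin k × Fin k => p.1 < p.2), f p.1 p.2 =
      ∏ i : Fin k, ∏ j ∈ Finset.Ioi i, f i j := by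
  rw [Finset.prod_sigma']
  exact Finset.prod_nbij' (fun p => ⟨p.1, p.2⟩) (fun x => (x.1, x.2))
    (by simp [Finset.mem_Ioi]) (by simp [Finset.mem_Ioi]) (by simp) (by simp) (by simp)

private lemma det_desc (k : ℕ) (d : Fin k → ℕ) :
    (Matrix.of fun i j : Fin k => ((d i).descFactorial (j : ℕ) : ℚ)).det =
      ∏ p ∈ Finset.univ.filter (fun p : Fin k × Fin k => p.1 < p.2),
        ((d p.2 : ℚ) - (d p.1 : ℚ)) := by
  have h := Matrix.det_eval_matrixOfPolynomials_eq_det_vandermonde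
      (fun i : Fin k => (d i : ℚ)) (fun j => descPochhammer ℚ (j : ℕ))
      (fun i => descPochhammer_natDegree (R := ℚ) (i : ℕ))
      (fun i => monic_descPochhammer _ _)
  have h2 : (Matrix.of fun i j : Fin k =>
      Polynomial.eval ((d i : ℚ)) (descPochhammer ℚ (j : ℕ))) =
      Matrix.of fun i j : Fin k => ((d i).descFactorial (j : ℕ) : ℚ) := by
    ext i j
    simp [descPochhammer_eval_eq_descFactorial]
  rw [h2] at h
  rw [← h, Matrix.det_vandermonde,
    prod_pairs' k (fun a b => ((d b : ℚ) - (d a : ℚ)))]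


private lemma perm_sum (k : ℕ) (σ : Equiv.Perm (Fin k)) :
    ∑ i : Fin k, ((σ i : ℕ)) = k * (k - 1) / 2 := by
  rw [Equiv.sum_comp σ (fun i : Fin k => (i : ℕ)),
    Fin.sum_univ_eq_sum_range (fun i => i) k, Finset.sum_range_id]

private lemma mult_eq (k n : ℕ) (d : Fin k → ℕ) (σ : Equiv.Perm (Fin k))
    (c : Fin k → ℕ) (hc : ∀ i, (σ i : ℕ) + c i = d i) (hsum : ∑ i, c i = n) :
    (Nat.multinomial Finset.univ c : ℚ) =
      (n.factorial : ℚ) / (∏ i, ((d i).factorial : ℚ)) *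
        ∏ i, ((d i).descFactorial ((σ i : ℕ)) : ℚ) := by
  have h1 : (∏ i, ((c i).factorial : ℚ)) * (Nat.multinomial Finset.univ c : ℚ)
      = (n.factorial : ℚ) := by
    rw [← hsum]
    exact_mod_cast congrArg (Nat.cast : ℕ → ℚ) (Nat.multinomial_spec Finset.univ c)
  have h2 : ∏ i, ((d i).factorial : ℚ) =
      (∏ i, ((c i).factorial : ℚ)) * ∏ i, ((d i).descFactorial ((σ i : ℕ)) : ℚ) := by
    rw [← Finset.prod_mul_distrib]
    refine Finset.prod_congr rfl fun i _ => ?_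
    have hle : (σ i : ℕ) ≤ d i := by have := hc i; omega
    have h3 := Nat.factorial_mul_descFactorial hle
    have hci : c i = d i - (σ i : ℕ) := by have := hc i; omega
    rw [hci]
    exact_mod_cast (congrArg (Nat.cast : ℕ → ℚ) h3).symm
  have hc0 : (∏ i, ((c i).factorial : ℚ)) ≠ 0 :=
    Finset.prod_ne_zero_iff.2 fun i _ => Nat.cast_ne_zero.2 (Nat.factorial_ne_zero _)
  have hdesc0 : (∏ i, ((d i).descFactorial ((σ i : ℕ)) : ℚ)) ≠ 0 := by
    refine Finset.prod_ne_zero_iff.2 fun i _ => Nat.cast_ne_zero.2 ?_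
    have hle : (σ i : ℕ) ≤ d i := by have := hc i; omega
    exact fun h => absurd (Nat.descFactorial_eq_zero_iff_lt.1 h) (by omega)
  have h4 : (Nat.multinomial Finset.univ c : ℚ)
      = (n.factorial : ℚ) / ∏ i, ((c i).factorial : ℚ) :=
    (eq_div_iff hc0).2 (by rw [mul_comm]; exact h1)
  rw [h4, h2]
  field_simp

private lemma key (k n : ℕ) (d : Fin k → ℕ) (hd : ∑ i, d i = n + k * (k - 1) / 2) :
    ∑ x ∈ ((Finset.univ : Finset (Equiv.Perm (Fin k))) ×ˢ
        Finset.piAntidiag Finset.univ n).filter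
        (fun x : Equiv.Perm (Fin k) × (Fin k → ℕ) => (fun i => (x.1 i : ℕ) + x.2 i) = d),
      ((Equiv.Perm.sign x.1 : ℤ) : ℚ) * (Nat.multinomial Finset.univ x.2 : ℚ) =
    (n.factorial : ℚ) / (∏ i, ((d i).factorial : ℚ)) *
      ∏ p ∈ Finset.univ.filter (fun p : Fin k × Fin k => p.1 < p.2),
        ((d p.2 : ℚ) - (d p.1 : ℚ)) := by
  classical
  have hstep1 :
      (∑ x ∈ ((Finset.univ : Finset (Equiv.Perm (Fin k))) ×ˢ
          Finset.piAntidiag Finset.univ n).filter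
          (fun x : Equiv.Perm (Fin k) × (Fin k → ℕ) => (fun i => (x.1 i : ℕ) + x.2 i) = d),
        ((Equiv.Perm.sign x.1 : ℤ) : ℚ) * (Nat.multinomial Finset.univ x.2 : ℚ)) =
      ∑ σ ∈ (Finset.univ : Finset (Equiv.Perm (Fin k))).filter
          (fun σ => ∀ i, (σ i : ℕ) ≤ d i),
        ((Equiv.Perm.sign σ : ℤ) : ℚ) *
          ((n.factorial : ℚ) / (∏ i, ((d i).factorial : ℚ)) *
            ∏ i, ((d i).descFactorial ((σ i : ℕ)) : ℚ)) := by
    refine Finset.sum_nbij' (fun x => x.1) (fun σ => (σ, fun i => d i - (σ i : ℕ)))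
      ?_ ?_ ?_ ?_ ?_
    · rintro ⟨σ, c⟩ hx
      simp only [Finset.mem_filter, Finset.mem_product, Finset.mem_piAntidiag] at hx ⊢
      exact ⟨Finset.mem_univ σ, fun i => by have := congrFun hx.2 i; omega⟩
    · intro σ hσ
      simp only [Finset.mem_filter, Finset.mem_univ, true_and] at hσ
      simp only [Finset.mem_filter, Finset.mem_product, Finset.mem_piAntidiag,
        Finset.mem_univ, true_and]
      refine ⟨⟨?_, fun _ _ => trivial⟩, funext fun i => by have := hσ i; omega⟩
      have h5 : ∑ i, ((d i - (σ i : ℕ)) + (σ i : ℕ)) = ∑ i, d i :=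
        Finset.sum_congr rfl fun i _ => by have := hσ i; omega
      rw [Finset.sum_add_distrib, perm_sum] at h5
      omega
    · rintro ⟨σ, c⟩ hx
      simp only [Finset.mem_filter, Finset.mem_product, Finset.mem_piAntidiag] at hx
      simp only [Prod.mk.injEq, true_and]
      funext i
      have := congrFun hx.2 i
      omega
    · intro σ hσ
      rfl
    · rintro ⟨σ, c⟩ hx
      simp only [Finset.mem_filter, Finset.mem_product, Finset.mem_piAntidiag] at hx
      rw [mult_eq k n d σ c (fun i => congrFun hx.2 i) hx.1.2.1]
  rw [hstep1]
  have hstep2 : (∑ σ ∈ (Finset.univ : Finset (Equiv.Perm (Fin k))).filter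
          (fun σ => ∀ i, (σ i : ℕ) ≤ d i),
        ((Equiv.Perm.sign σ : ℤ) : ℚ) *
          ((n.factorial : ℚ) / (∏ i, ((d i).factorial : ℚ)) *
            ∏ i, ((d i).descFactorial ((σ i : ℕ)) : ℚ))) =
      ∑ σ : Equiv.Perm (Fin k),
        ((Equiv.Perm.sign σ : ℤ) : ℚ) *
          ((n.factorial : ℚ) / (∏ i, ((d i).factorial : ℚ)) *
            ∏ i, ((d i).descFactorial ((σ i : ℕ)) : ℚ)) := by
    refine Finset.sum_subset (Finset.filter_subset _ _) ?_
    intro σ _ hσ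
    simp only [Finset.mem_filter, Finset.mem_univ, true_and, not_forall, not_le] at hσ
    obtain ⟨i, hi⟩ := hσ
    have hz : ((d i).descFactorial ((σ i : ℕ)) : ℚ) = 0 := by
      exact_mod_cast congrArg (Nat.cast : ℕ → ℚ) (Nat.descFactorial_eq_zero_iff_lt.2 hi)
    have hz2 : (∏ i, ((d i).descFactorial ((σ i : ℕ)) : ℚ)) = 0 :=
      Finset.prod_eq_zero (Finset.mem_univ i) hz
    rw [hz2, mul_zero, mul_zero]
  rw [hstep2]
  have hdet : ∑ σ : Equiv.Perm (Fin k),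
      ((Equiv.Perm.sign σ : ℤ) : ℚ) * ∏ i, ((d i).descFactorial ((σ i : ℕ)) : ℚ) =
      (Matrix.of fun i j : Fin k => ((d i).descFactorial ((j : ℕ)) : ℚ)).det := by
    rw [← Matrix.det_transpose, Matrix.det_apply']
    rfl
  calc ∑ σ : Equiv.Perm (Fin k),
      ((Equiv.Perm.sign σ : ℤ) : ℚ) *
        ((n.factorial : ℚ) / (∏ i, ((d i).factorial : ℚ)) *
          ∏ i, ((d i).descFactorial ((σ i : ℕ)) : ℚ))
      = (n.factorial : ℚ) / (∏ i, ((d i).factorial : ℚ)) *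
        ∑ σ : Equiv.Perm (Fin k),
          ((Equiv.Perm.sign σ : ℤ) : ℚ) * ∏ i, ((d i).descFactorial ((σ i : ℕ)) : ℚ) := by
        rw [Finset.mul_sum]; exact Finset.sum_congr rfl fun σ _ => by ring
    _ = _ := by rw [hdet, det_desc]

/-- `∏_{i<j}(x_j - x_i) · (x₁+⋯+x_k)^n
  = ∑_{n₁+⋯+n_k = n + k(k-1)/2} (n!/∏ nᵢ!) ∏_{i<j}(n_j-n_i) ∏ᵢ xᵢ^{nᵢ}`. -/
theorem stmt_6 (k n : ℕ) (hk : 0 < k) :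
    (∏ p ∈ Finset.univ.filter (fun p : Fin k × Fin k => p.1 < p.2), (X p.2 - X p.1)) *
        (∑ i : Fin k, X i) ^ n =
      ∑ c ∈ (Fintype.piFinset fun _ : Fin k => Finset.range (n + k * (k - 1) / 2 + 1)).filter
          (fun c => ∑ i, c i = n + k * (k - 1) / 2),
        C ((n.factorial : ℚ) / (∏ i, ((c i).factorial : ℚ)) *
            ∏ p ∈ Finset.univ.filter (fun p : Fin k × Fin k => p.1 < p.2),
              ((c p.2 : ℚ) - (c p.1 : ℚ))) *
          ∏ i, (X i : MvPolynomial (Fin k) ℚ) ^ c i := by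
  classical
  have hv : (∏ p ∈ Finset.univ.filter (fun p : Fin k × Fin k => p.1 < p.2),
      (X p.2 - X p.1 : MvPolynomial (Fin k) ℚ)) =
      ∑ σ : Equiv.Perm (Fin k),
        ((Equiv.Perm.sign σ : ℤ) : MvPolynomial (Fin k) ℚ) *
          ∏ i, (X i : MvPolynomial (Fin k) ℚ) ^ ((σ i : ℕ)) := by
    rw [prod_pairs' k (fun a b => (X b - X a : MvPolynomial (Fin k) ℚ)),
      ← Matrix.det_vandermonde (fun i : Fin k => (X i : MvPolynomial (Fin k) ℚ)),
      ← Matrix.det_transpose, Matrix.det_apply']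
    rfl
  have hm : ((∑ i : Fin k, X i : MvPolynomial (Fin k) ℚ)) ^ n =
      ∑ c ∈ Finset.piAntidiag Finset.univ n,
        (Nat.multinomial Finset.univ c : MvPolynomial (Fin k) ℚ) *
          ∏ i, (X i : MvPolynomial (Fin k) ℚ) ^ c i :=
    Finset.sum_pow_eq_sum_piAntidiag Finset.univ _ n
  rw [hv, hm, Finset.sum_mul_sum, ← Finset.sum_product']
  have hmaps : ∀ x ∈ ((Finset.univ : Finset (Equiv.Perm (Fin k))) ×ˢ
      Finset.piAntidiag Finset.univ n),
      (fun i => ((x.1 i : ℕ)) + x.2 i) ∈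
        (Fintype.piFinset fun _ : Fin k =>
          Finset.range (n + k * (k - 1) / 2 + 1)).filter
          (fun c => ∑ i, c i = n + k * (k - 1) / 2) := by
    rintro ⟨σ, c⟩ hx
    simp only [Finset.mem_product, Finset.mem_piAntidiag] at hx
    have hsum : ∑ i, ((σ i : ℕ) + c i) = n + k * (k - 1) / 2 := by
      rw [Finset.sum_add_distrib, perm_sum, hx.2.1]; ring
    simp only [Finset.mem_filter, Fintype.mem_piFinset, Finset.mem_range]
    refine ⟨fun i => ?_, by simpa using hsum⟩
    show (σ i : ℕ) + c i < n + k * (k - 1) / 2 + 1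
    have h2 : (σ i : ℕ) + c i ≤ ∑ x : Fin k, ((σ x : ℕ) + c x) :=
      Finset.single_le_sum (f := fun x => (σ x : ℕ) + c x)
        (fun i _ => Nat.zero_le _) (Finset.mem_univ i)
    omega
  rw [← Finset.sum_fiberwise_of_maps_to hmaps]
  refine Finset.sum_congr rfl fun d hd => ?_
  have hterm : ∀ x ∈ ((Finset.univ : Finset (Equiv.Perm (Fin k))) ×ˢ
      Finset.piAntidiag Finset.univ n).filter
      (fun x => (fun i => ((x.1 i : ℕ)) + x.2 i) = d),
      ((Equiv.Perm.sign x.1 : ℤ) : MvPolynomial (Fin k) ℚ) *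
          (∏ i, (X i : MvPolynomial (Fin k) ℚ) ^ ((x.1 i : ℕ))) *
        ((Nat.multinomial Finset.univ x.2 : MvPolynomial (Fin k) ℚ) *
          ∏ i, (X i : MvPolynomial (Fin k) ℚ) ^ x.2 i) =
      C (((Equiv.Perm.sign x.1 : ℤ) : ℚ) * (Nat.multinomial Finset.univ x.2 : ℚ)) *
        ∏ i, (X i : MvPolynomial (Fin k) ℚ) ^ d i := by
    rintro ⟨σ, c⟩ hx
    simp only [Finset.mem_filter] at hx
    have h1 : (∏ i, (X i : MvPolynomial (Fin k) ℚ) ^ ((σ i : ℕ))) *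
        ∏ i, (X i : MvPolynomial (Fin k) ℚ) ^ c i =
        ∏ i, (X i : MvPolynomial (Fin k) ℚ) ^ d i := by
      rw [← Finset.prod_mul_distrib]
      exact Finset.prod_congr rfl fun i _ => by
        rw [← pow_add, congrFun hx.2 i]
    calc ((Equiv.Perm.sign σ : ℤ) : MvPolynomial (Fin k) ℚ) *
          (∏ i, (X i : MvPolynomial (Fin k) ℚ) ^ ((σ i : ℕ))) *
        ((Nat.multinomial Finset.univ c : MvPolynomial (Fin k) ℚ) *
          ∏ i, (X i : MvPolynomial (Fin k) ℚ) ^ c i)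
        = (C (((Equiv.Perm.sign σ : ℤ) : ℚ)) * C ((Nat.multinomial Finset.univ c : ℚ))) *
          ((∏ i, (X i : MvPolynomial (Fin k) ℚ) ^ ((σ i : ℕ))) *
            ∏ i, (X i : MvPolynomial (Fin k) ℚ) ^ c i) := by
          rw [map_intCast (C : ℚ →+* MvPolynomial (Fin k) ℚ),
            map_natCast (C : ℚ →+* MvPolynomial (Fin k) ℚ)]
          ring
      _ = _ := by rw [← C_mul, h1]
  rw [Finset.sum_congr rfl hterm, ← Finset.sum_mul, ← map_sum]
  simp only [Finset.mem_filter] at hd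
  rw [key k n d hd.2]
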